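/- Refinement theorem: Let F = (A, U, I) be a sequential formalism, S and S' subsets of A, and H a refinement from S to S'. If (A1) S is algebraically stable through H and (A2) every algebraically consistent network over S' is satisfiable, then every algebraically consistent network over S is satisfiable. If in addition S is a ↱-closed ∘∧-closed subset, then S is algebraically tractable. -/

import Mathlib

open scoped Classical

/-- An atom (basic relation) of a Boolean algebra: a nonzero element `b` such that
for every `r`, `r ⊓ b = b` or `r ⊓ b = ⊥`. -/
def IsAtomRel {α : Type*} [BooleanAlgebra α] (b : α) : Prop :=
  b ≠ ⊥ ∧ ∀ r : α, r ⊓ b = b ∨ r ⊓ b = ⊥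

/-- The finset of atoms below `r` (`r ⊆ r'` means `r ⊔ r' = r'`, i.e. `r ≤ r'`). -/
noncomputable def atomsBelow {α : Type*} [BooleanAlgebra α] [Fintype α] (r : α) : Finset α :=
  Finset.univ.filter fun b => IsAtomRel b ∧ b ≤ r

/-- A non-associative relation algebra: a Boolean algebra with composition,
converse and identity satisfying the usual axioms (incl. the Peircean law). -/
structure NA (α : Type*) [BooleanAlgebra α] where
  comp : α → α → α
  conv : α → α
  e : α
  conv_conv : ∀ x, conv (conv x) = x
  conv_sup : ∀ x y, conv (x ⊔ y) = conv x ⊔ conv y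
  conv_comp : ∀ x y, conv (comp x y) = comp (conv y) (conv x)
  comp_e : ∀ x, comp x e = x
  e_comp : ∀ x, comp e x = x
  comp_sup : ∀ x y z, comp x (y ⊔ z) = comp x y ⊔ comp x z
  peirce : ∀ x y z, comp x y ⊓ conv z = ⊥ ↔ comp y z ⊓ conv x = ⊥

/-- Relational composition of sets of pairs. -/
def relComp {U : Type*} (R S : Set (U × U)) : Set (U × U) :=
  {p | ∃ y, (p.1, y) ∈ R ∧ (y, p.2) ∈ S}

/-- A symmetric qualitative formalism `(A, U, φ)`. -/
structure SQF (α : Type*) [BooleanAlgebra α] [Fintype α] (U : Type*) extends NA α where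
  nonempty_univ : Nonempty U
  φ : α → Set (U × U)
  φ_bot : φ ⊥ = ∅
  φ_conv : ∀ r, φ (conv r) = {p | (p.2, p.1) ∈ φ r}
  φ_inf : ∀ r r', φ (r ⊓ r') = φ r ∩ φ r'
  φ_sup : ∀ r r', φ (r ⊔ r') = φ r ∪ φ r'
  φ_comp : ∀ r r', relComp (φ r) (φ r') ∩ φ ⊤ ⊆ φ (comp r r')

/-- A projection operator between two non-associative relation algebras. -/
structure ProjOp {α β : Type*} [BooleanAlgebra α] [BooleanAlgebra β]
    (A : NA α) (B : NA β) where
  f : α → β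
  map_sup : ∀ r r', f (r ⊔ r') = f r ⊔ f r'
  map_conv : ∀ r, f (A.conv r) = B.conv (f r)

/-- A multi-algebra: a family of finite non-associative relation algebras together
with projection operators between any two distinct components. -/
structure MultiAlg (ι : Type*) [Fintype ι] (α : ι → Type*)
    [∀ i, BooleanAlgebra (α i)] [∀ i, Fintype (α i)] where
  na : ∀ i, NA (α i)
  proj : ∀ i j, i ≠ j → α i → α j
  proj_sup : ∀ i j (h : i ≠ j) (r r' : α i),
    proj i j h (r ⊔ r') = proj i j h r ⊔ proj i j h r'
  proj_conv : ∀ i j (h : i ≠ j) (r : α i),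
    proj i j h ((na i).conv r) = (na j).conv (proj i j h r)

namespace MultiAlg

variable {ι : Type*} [Fintype ι] {α : ι → Type*} [∀ i, BooleanAlgebra (α i)]
  [∀ i, Fintype (α i)]

/-- Componentwise composition of multi-algebra relations. -/
def comp (M : MultiAlg ι α) (R R' : ∀ i, α i) : ∀ i, α i :=
  fun i => (M.na i).comp (R i) (R' i)

/-- Componentwise converse of multi-algebra relations. -/
def conv (M : MultiAlg ι α) (R : ∀ i, α i) : ∀ i, α i :=
  fun i => (M.na i).conv (R i)

/-- A basic relation is a tuple of atoms. -/
def Basic (M : MultiAlg ι α) (R : ∀ i, α i) : Prop := ∀ i, IsAtomRel (R i)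

/-- `R` is closed under projection: `Rⱼ ⊆ ↱ⁱʲ(Rᵢ)` for all distinct `i, j`. -/
def RelClosedProj (M : MultiAlg ι α) (R : ∀ i, α i) : Prop :=
  ∀ i j (h : i ≠ j), R j ≤ M.proj i j h (R i)

/-- One pass of the projection-closure iteration: replace each `Rⱼ` by
`Rⱼ ⊓ ↱ⁱʲ(Rᵢ)` for all `i ≠ j`. -/
noncomputable def pstep (M : MultiAlg ι α) (R : ∀ i, α i) : ∀ i, α i :=
  fun j => R j ⊓ Finset.univ.inf fun i => if h : i ≠ j then M.proj i j h (R i) else ⊤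

/-- The projection closure `↱R`, obtained by iterating the refinement step
until a fixed point is reached (reached after at most `card` steps). -/
noncomputable def pcl (M : MultiAlg ι α) (R : ∀ i, α i) : ∀ i, α i :=
  M.pstep^[Fintype.card (∀ i, α i)] R

/-- A relation is `↱`-consistent if it is closed under projection and
not trivially inconsistent. -/
def PConsistent (M : MultiAlg ι α) (R : ∀ i, α i) : Prop :=
  M.RelClosedProj R ∧ ∀ i, R i ≠ ⊥

/-- The inverse projection operator `↰ⁱʲ` of `↱ⁱʲ`, defined on atoms by
`b ≤ ↰ⁱʲ(b')` iff `b' ≤ ↱ⁱʲ(b)` and extended by union. -/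
noncomputable def iproj (M : MultiAlg ι α) (i j : ι) (h : i ≠ j) (r : α j) : α i :=
  (Finset.univ.filter fun b : α i =>
    IsAtomRel b ∧ ∃ b' : α j, IsAtomRel b' ∧ b' ≤ r ∧ b' ≤ M.proj i j h b).sup id

/-- `PathUp M E i j l x y`: following the directed path `l = [i, …, j]` of edges of `E`
upwards, the composite of the direct projections along it maps `x : α i` to `y : α j`. -/
inductive PathUp (M : MultiAlg ι α) (E : ι → ι → Prop) : ∀ i j : ι, List ι → α i → α j → Prop
  | refl (i : ι) (x : α i) : PathUp M E i i [i] x x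
  | step {i j k : ι} {l : List ι} (e : E i j) (h : i ≠ j) (x : α i) {y : α k} :
      PathUp M E j k l (M.proj i j h x) y → PathUp M E i k (i :: l) x y

/-- `PathDown M E i j l x y`: following the path `l = [i, …, j]` downwards along
reversed edges of `E`, the composite of the inverse projections maps `x : α i` to
`y : α j`. -/
inductive PathDown (M : MultiAlg ι α) (E : ι → ι → Prop) : ∀ i j : ι, List ι → α i → α j → Prop
  | refl (i : ι) (x : α i) : PathDown M E i i [i] x x
  | step {i j k : ι} {l : List ι} (e : E j i) (h : j ≠ i) (x : α i) {y : α k} :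
      PathDown M E j k l (M.iproj j i h x) y → PathDown M E i k (i :: l) x y

end MultiAlg

/-- A plenary anti-tree structure on a multi-algebra: an anti-tree (a unique directed
path from every node to the root) on the components such that, along the (unique)
duplicate-free chain `i = k₀ → ⋯ → k_s ← ⋯ ← k_{s+t+1} = j` connecting two distinct
components, the composite of the direct projections going up and of the inverse
projections going down refines the direct projection `↱ⁱʲ` on every atom.
A multi-algebra admitting such a structure is a tree multi-algebra. -/
structure PlenaryAntiTree {ι : Type*} [Fintype ι] {α : ι → Type*}
    [∀ i, BooleanAlgebra (α i)] [∀ i, Fintype (α i)] (M : MultiAlg ι α) where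
  E : ι → ι → Prop
  root : ι
  unique_path : ∀ v : ι, v ≠ root →
    ∃! l : List ι, l.head? = some v ∧ l.getLast? = some root ∧ List.Chain' E l
  plenary : ∀ i j (hij : i ≠ j) (b : α i), IsAtomRel b →
    ∀ (w : ι) (lu ld : List ι) (y : α w) (z : α j),
      MultiAlg.PathUp M E i w lu b y → MultiAlg.PathDown M E w j ld y z →
      (lu ++ ld.tail).Nodup → z ≤ M.proj i j hij b

/-- A sequential formalism `(A, U, I)` over a multi-algebra. -/
structure SeqFormalism (ι : Type*) [Fintype ι] (α : ι → Type*)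
    [∀ i, BooleanAlgebra (α i)] [∀ i, Fintype (α i)] (U : Type*) where
  M : MultiAlg ι α
  I : (∀ i, α i) → Set (U × U)
  I_pcl : ∀ R, I (M.pcl R) = I R
  I_conv : ∀ R, I (M.conv R) = {p | (p.2, p.1) ∈ I R}
  I_bot : I ⊥ = ∅
  I_comp : ∀ R R', relComp (I R) (I R') ∩ I ⊤ ⊆ I (M.comp R R')
  I_inf : ∀ R R', I (R ⊓ R') = I R ∩ I R'
  I_basic : ∀ R, I R = ⋃ B ∈ {B : ∀ i, α i | M.Basic B ∧ B ≤ R}, I B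

section Networks

variable {ι : Type*} [Fintype ι] {α : ι → Type*} [∀ i, BooleanAlgebra (α i)]
  [∀ i, Fintype (α i)] {U : Type*} {V : Type*} [Fintype V]

/-- A network (over variables `V`) is trivially inconsistent if some component of some
constraint between distinct variables is `⊥`. -/
def NetTrivIncons (N : V → V → ∀ i, α i) : Prop := ∃ x y : V, x ≠ y ∧ ∃ i, N x y i = ⊥

/-- A scenario: all constraints between distinct variables are basic. -/
def Scenario (M : MultiAlg ι α) (N : V → V → ∀ i, α i) : Prop :=
  ∀ x y : V, x ≠ y → M.Basic (N x y)

/-- `N` refines `N'`. -/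
def Refines (N N' : V → V → ∀ i, α i) : Prop := ∀ x y : V, x ≠ y → N x y ≤ N' x y

/-- `u` is a solution of the network `N`. -/
def IsSolution (F : SeqFormalism ι α U) (N : V → V → ∀ i, α i) (u : V → U) : Prop :=
  ∀ x y : V, x ≠ y → (u x, u y) ∈ F.I (N x y)

/-- A network is satisfiable if it has a solution. -/
def NetSat (F : SeqFormalism ι α U) (N : V → V → ∀ i, α i) : Prop :=
  ∃ u : V → U, IsSolution F N u

/-- The network is closed under composition. -/
def ClosedComp (M : MultiAlg ι α) (N : V → V → ∀ i, α i) : Prop :=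
  ∀ x y z : V, x ≠ y → y ≠ z → x ≠ z → N x z ≤ M.comp (N x y) (N y z)

/-- The network is closed under projection. -/
def NetClosedProj (M : MultiAlg ι α) (N : V → V → ∀ i, α i) : Prop :=
  ∀ x y : V, x ≠ y → M.RelClosedProj (N x y)

/-- Algebraically closed: closed under composition and projection. -/
def AlgClosed (M : MultiAlg ι α) (N : V → V → ∀ i, α i) : Prop :=
  ClosedComp M N ∧ NetClosedProj M N

/-- Algebraically consistent: algebraically closed and not trivially inconsistent. -/
def AlgConsistent (M : MultiAlg ι α) (N : V → V → ∀ i, α i) : Prop :=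
  AlgClosed M N ∧ ¬ NetTrivIncons N

/-- One pass of the algebraic-closure iteration: close each constraint under projection
and refine it by all compositions `N^{xy} ∘ N^{yz}`. -/
noncomputable def aclStep (M : MultiAlg ι α) (N : V → V → ∀ i, α i) : V → V → ∀ i, α i :=
  fun x z => if x = z then N x z else
    M.pcl (N x z) ⊓ Finset.univ.inf fun y =>
      if x ≠ y ∧ y ≠ z then M.comp (N x y) (N y z) else ⊤

/-- The algebraic closure of a network: iterate the refinement operations until a
fixed point is reached. -/
noncomputable def acl (M : MultiAlg ι α) (N : V → V → ∀ i, α i) : V → V → ∀ i, α i :=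
  (aclStep M)^[Fintype.card (V → V → ∀ i, α i)] N

/-- Closing a network under projection only. -/
noncomputable def netProjClose (M : MultiAlg ι α) (N : V → V → ∀ i, α i) :
    V → V → ∀ i, α i :=
  fun x y => if x = y then N x y else M.pcl (N x y)

/-- One pass of the composition-closure iteration. -/
noncomputable def compStep (M : MultiAlg ι α) (N : V → V → ∀ i, α i) : V → V → ∀ i, α i :=
  fun x z => if x = z then N x z else
    N x z ⊓ Finset.univ.inf fun y =>
      if x ≠ y ∧ y ≠ z then M.comp (N x y) (N y z) else ⊤

/-- Closing a network under composition only. -/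
noncomputable def compClose (M : MultiAlg ι α) (N : V → V → ∀ i, α i) : V → V → ∀ i, α i :=
  (compStep M)^[Fintype.card (V → V → ∀ i, α i)] N

/-- A network over a subset `S` of the multi-algebra. -/
def NetworkOver (S : Set (∀ i, α i)) (N : V → V → ∀ i, α i) : Prop :=
  ∀ x y : V, x ≠ y → N x y ∈ S

end Networks

section Subsets

variable {ι : Type*} [Fintype ι] {α : ι → Type*} [∀ i, BooleanAlgebra (α i)]
  [∀ i, Fintype (α i)] {U : Type*}

/-- `S` is `↱`-closed: the projection closure of any relation of `S` is in `S`. -/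
def PclClosed (M : MultiAlg ι α) (S : Set (∀ i, α i)) : Prop :=
  ∀ R ∈ S, M.pcl R ∈ S

/-- `S` is `∘∧`-closed: `(R ∘ R') ∧ R'' ∈ S` for all `R, R', R'' ∈ S`. -/
def CompInfClosed (M : MultiAlg ι α) (S : Set (∀ i, α i)) : Prop :=
  ∀ R ∈ S, ∀ R' ∈ S, ∀ R'' ∈ S, (M.comp R R') ⊓ R'' ∈ S

/-- `S` is atomizable: every satisfiable relation of `S` contains a satisfiable
basic relation belonging to `S`. -/
def Atomizable (F : SeqFormalism ι α U) (S : Set (∀ i, α i)) : Prop :=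
  ∀ R ∈ S, F.I R ≠ ∅ → ∃ B ∈ S, F.M.Basic B ∧ B ≤ R ∧ F.I B ≠ ∅

/-- `S` is dissociable: closing any network over `S` under projection then under
composition yields a network that is algebraically consistent or trivially
inconsistent. -/
def Dissociable (M : MultiAlg ι α) (S : Set (∀ i, α i)) : Prop :=
  ∀ (V : Type) [Fintype V], ∀ N : V → V → ∀ i, α i, NetworkOver S N →
    AlgConsistent M (compClose M (netProjClose M N)) ∨
      NetTrivIncons (compClose M (netProjClose M N))

/-- `S` is algebraically tractable: a network over `S` is satisfiable iff its
algebraic closure is not trivially inconsistent. -/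
def AlgTractable (F : SeqFormalism ι α U) (S : Set (∀ i, α i)) : Prop :=
  ∀ (V : Type) [Fintype V], ∀ N : V → V → ∀ i, α i, NetworkOver S N →
    (NetSat F N ↔ ¬ NetTrivIncons (acl F.M N))

/-- The `i`-th slice of a subset of a multi-algebra. -/
def sliceSet (S : Set (∀ i, α i)) (i : ι) : Set (α i) := {r | ∃ R ∈ S, R i = r}

end Subsets

section SingleAlgebraNetworks

variable {β : Type*} [BooleanAlgebra β] [Fintype β]

/-- One pass of the (classical, single-algebra) composition-closure iteration. -/
noncomputable def sCompStep {V : Type*} [Fintype V] (na : NA β) (n : V → V → β) :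
    V → V → β :=
  fun x z => if x = z then n x z else
    n x z ⊓ Finset.univ.inf fun y =>
      if x ≠ y ∧ y ≠ z then na.comp (n x y) (n y z) else ⊤

/-- The (classical) algebraic closure of a network over a single algebra. -/
noncomputable def sCompClose {V : Type*} [Fintype V] (na : NA β) (n : V → V → β) :
    V → V → β :=
  (sCompStep na)^[Fintype.card (V → V → β)] n

/-- Closure under composition for a network over a single algebra. -/
def sClosedComp {V : Type*} (na : NA β) (n : V → V → β) : Prop :=
  ∀ x y z : V, x ≠ y → y ≠ z → x ≠ z → n x z ≤ na.comp (n x y) (n y z)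

/-- A classical subclass is minimal: the algebraic closure of any network over it is
the minimal network, i.e. every basic relation contained in a relation of the closure
extends to an algebraically closed scenario refining the closure. -/
def SliceMinimal (na : NA β) (Si : Set β) : Prop :=
  ∀ (V : Type) [Fintype V], ∀ n : V → V → β, (∀ x y : V, x ≠ y → n x y ∈ Si) →
    ∀ x y : V, x ≠ y → ∀ b : β, IsAtomRel b → b ≤ sCompClose na n x y →
      ∃ s : V → V → β, (∀ p q : V, p ≠ q → IsAtomRel (s p q)) ∧
        (∀ p q : V, p ≠ q → s p q ≤ sCompClose na n p q) ∧
        s x y = b ∧ sClosedComp na s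

end SingleAlgebraNetworks
/-! ### Auxiliary lemmas for the refinement theorem -/

lemma iterate_defl {γ : Type*} [Preorder γ] (f : γ → γ) (hf : ∀ x, f x ≤ x) :
    ∀ (n : ℕ) (x : γ), f^[n] x ≤ x := by
  intro n
  induction n with
  | zero => intro x; simp
  | succ n ih =>
    intro x
    rw [Function.iterate_succ_apply']
    exact (hf _).trans (ih x)

lemma iterate_card_fixed {γ : Type*} [PartialOrder γ] [Fintype γ] (f : γ → γ)
    (hf : ∀ x, f x ≤ x) (x : γ) :
    f (f^[Fintype.card γ] x) = f^[Fintype.card γ] x := by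
  set n := Fintype.card γ with hn
  have hanti : ∀ a b : ℕ, a ≤ b → f^[b] x ≤ f^[a] x := by
    intro a b hab
    obtain ⟨c, rfl⟩ := Nat.exists_eq_add_of_le hab
    rw [Nat.add_comm, Function.iterate_add_apply]
    exact iterate_defl f hf c _
  have hninj : ¬ Function.Injective (fun k : Fin (n + 1) => f^[(k : ℕ)] x) := by
    intro hinj
    have h1 := Fintype.card_le_of_injective _ hinj
    rw [Fintype.card_fin] at h1
    omega
  rw [Function.Injective] at hninj
  push_neg at hninj
  obtain ⟨a, b, hab, hne⟩ := hninj
  -- wlog a < b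
  have key : ∃ a : ℕ, a ≤ n ∧ f (f^[a] x) = f^[a] x := by
    rcases lt_or_gt_of_ne hne with h | h
    · refine ⟨a, by omega, ?_⟩
      have h1 : f^[(b : ℕ)] x ≤ f^[(a : ℕ) + 1] x := hanti _ _ (by omega)
      have h2 : f^[(a : ℕ) + 1] x ≤ f^[(a : ℕ)] x := hanti _ _ (by omega)
      have heq : f^[(a : ℕ) + 1] x = f^[(a : ℕ)] x := le_antisymm h2 (hab ▸ h1)
      rwa [Function.iterate_succ_apply'] at heq
    · refine ⟨b, by omega, ?_⟩
      have h1 : f^[(a : ℕ)] x ≤ f^[(b : ℕ) + 1] x := hanti _ _ (by omega)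
      have h2 : f^[(b : ℕ) + 1] x ≤ f^[(b : ℕ)] x := hanti _ _ (by omega)
      have heq : f^[(b : ℕ) + 1] x = f^[(b : ℕ)] x := le_antisymm h2 (hab ▸ h1)
      rwa [Function.iterate_succ_apply'] at heq
  obtain ⟨a, han, hfix⟩ := key
  have hall : f^[n] x = f^[a] x := by
    have : f^[n - a + a] x = f^[n - a] (f^[a] x) := Function.iterate_add_apply f _ _ x
    rw [Nat.sub_add_cancel han] at this
    rw [this, Function.iterate_fixed hfix]
  rw [hall, hfix]

section AuxHelpers

variable {ι : Type*} [Fintype ι] {α : ι → Type*} [∀ i, BooleanAlgebra (α i)]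
  [∀ i, Fintype (α i)] {U : Type*} {V : Type*} [Fintype V]

lemma aux_I_mono (F : SeqFormalism ι α U) {R R' : ∀ i, α i} (h : R ≤ R') :
    F.I R ⊆ F.I R' := by
  have h1 : R ⊓ R' = R := inf_eq_left.mpr h
  calc F.I R = F.I (R ⊓ R') := by rw [h1]
    _ = F.I R ∩ F.I R' := F.I_inf R R'
    _ ⊆ F.I R' := Set.inter_subset_right

lemma aux_I_empty_of_bot (F : SeqFormalism ι α U) {R : ∀ i, α i} {i : ι} (h : R i = ⊥) :
    F.I R = ∅ := by
  rw [F.I_basic]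
  apply Set.eq_empty_iff_forall_notMem.mpr
  intro p hp
  simp only [Set.mem_iUnion, Set.mem_setOf_eq] at hp
  obtain ⟨B, ⟨hB, hBR⟩, _⟩ := hp
  have hb : B i ≤ R i := hBR i
  rw [h, le_bot_iff] at hb
  exact (hB i).1 hb

lemma aux_pstep_le (M : MultiAlg ι α) (R : ∀ i, α i) : M.pstep R ≤ R :=
  fun _ => inf_le_left

lemma aux_pcl_le (M : MultiAlg ι α) (R : ∀ i, α i) : M.pcl R ≤ R :=
  iterate_defl _ (aux_pstep_le M) _ R

lemma aux_pstep_pcl (M : MultiAlg ι α) (R : ∀ i, α i) : M.pstep (M.pcl R) = M.pcl R :=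
  iterate_card_fixed _ (aux_pstep_le M) R

lemma aux_relClosedProj_of_fixed (M : MultiAlg ι α) {R : ∀ i, α i}
    (h : M.pstep R = R) : M.RelClosedProj R := by
  intro i j hij
  conv_lhs => rw [← h]
  refine inf_le_right.trans ?_
  refine (Finset.inf_le (Finset.mem_univ i)).trans ?_
  rw [dif_pos hij]

lemma aux_aclStep_le (M : MultiAlg ι α) (N : V → V → ∀ i, α i) :
    aclStep M N ≤ N := by
  intro x z
  by_cases h : x = z
  · simp only [aclStep, if_pos h]; exact le_rfl
  · simp only [aclStep, if_neg h]
    exact inf_le_left.trans (aux_pcl_le M _)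

lemma aux_sol_aclStep (F : SeqFormalism ι α U) (N : V → V → ∀ i, α i) (u : V → U)
    (hu : IsSolution F N u) : IsSolution F (aclStep F.M N) u := by
  intro x z hxz
  have htop : (u x, u z) ∈ F.I ⊤ := aux_I_mono F le_top (hu x z hxz)
  simp only [aclStep, if_neg hxz]
  rw [F.I_inf, F.I_pcl]
  refine ⟨hu x z hxz, ?_⟩
  have key : ∀ s : Finset V, (u x, u z) ∈ F.I (s.inf fun y =>
      if x ≠ y ∧ y ≠ z then F.M.comp (N x y) (N y z) else ⊤) := by
    intro s
    induction s using Finset.induction_on with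
    | empty => simpa using htop
    | insert _ _ hna ih =>
      rw [Finset.inf_insert, F.I_inf]
      refine ⟨?_, ih⟩
      split_ifs with hc
      · exact F.I_comp _ _ ⟨⟨u _, hu x _ hc.1, hu _ z hc.2⟩, htop⟩
      · exact htop
  exact key Finset.univ

lemma aux_over_aclStep (M : MultiAlg ι α) (S : Set (∀ i, α i))
    (hPcl : PclClosed M S) (hCI : CompInfClosed M S)
    (N : V → V → ∀ i, α i) (hover : NetworkOver S N) :
    NetworkOver S (aclStep M N) := by
  intro x z hxz
  simp only [aclStep, if_neg hxz]
  have key : ∀ s : Finset V,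
      M.pcl (N x z) ⊓ (s.inf fun y =>
        if x ≠ y ∧ y ≠ z then M.comp (N x y) (N y z) else ⊤) ∈ S := by
    intro s
    induction s using Finset.induction_on with
    | empty => simpa using hPcl _ (hover x z hxz)
    | insert _ _ hna ih =>
      rw [Finset.inf_insert, inf_left_comm]
      split_ifs with hc
      · exact hCI _ (hover x _ hc.1) _ (hover _ z hc.2) _ ih
      · rwa [top_inf_eq]
  exact key Finset.univ

end AuxHelpers

/-- Refinement theorem: if `H` is a refinement from `S` to `S'`,
(A1) `S` is algebraically stable through `H`, and (A2) algebraically consistent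
networks over `S'` are satisfiable, then algebraically consistent networks over `S`
are satisfiable; if moreover `S` is `↱`-closed and `∘∧`-closed, then `S` is
algebraically tractable. -/
theorem stmt_18 {ι : Type*} [Fintype ι] {α : ι → Type*} [∀ i, BooleanAlgebra (α i)]
    [∀ i, Fintype (α i)] {U : Type*} (F : SeqFormalism ι α U)
    (S S' : Set (∀ i, α i)) (H : (∀ i, α i) → (∀ i, α i))
    (hRefine : ∀ R ∈ S, H R ≤ R)
    (hNotBot : ∀ R ∈ S, (∀ i, R i ≠ ⊥) → ∀ i, H R i ≠ ⊥)
    (hInto : ∀ R ∈ S, H R ∈ S')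
    (hA1 : ∀ (V : Type) [Fintype V] (N : V → V → ∀ i, α i),
      NetworkOver S N → AlgConsistent F.M N →
        AlgConsistent F.M (fun x y => H (N x y)))
    (hA2 : ∀ (V : Type) [Fintype V] (N : V → V → ∀ i, α i),
      NetworkOver S' N → AlgConsistent F.M N → NetSat F N) :
    (∀ (V : Type) [Fintype V] (N : V → V → ∀ i, α i),
      NetworkOver S N → AlgConsistent F.M N → NetSat F N) ∧
    (PclClosed F.M S → CompInfClosed F.M S → AlgTractable F S) := by
    classical
  have part1 : ∀ (V : Type) [Fintype V] (N : V → V → ∀ i, α i),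
      NetworkOver S N → AlgConsistent F.M N → NetSat F N := by
    intro V _ N hover hcons
    obtain ⟨u, hu⟩ := hA2 V (fun x y => H (N x y))
      (fun x y hxy => hInto _ (hover x y hxy)) (hA1 V N hover hcons)
    exact ⟨u, fun x y hxy => aux_I_mono F (hRefine _ (hover x y hxy)) (hu x y hxy)⟩
  refine ⟨part1, ?_⟩
  intro hPcl hCI V _ N hover
  have hover_acl : ∀ n : ℕ, NetworkOver S ((aclStep F.M)^[n] N) := by
    intro n
    induction n with
    | zero => exact hover
    | succ n ih =>
      rw [Function.iterate_succ_apply']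
      exact aux_over_aclStep F.M S hPcl hCI _ ih
  have hacl_le : ∀ x y : V, acl F.M N x y ≤ N x y := by
    intro x y
    exact iterate_defl (aclStep F.M) (aux_aclStep_le F.M) _ N x y
  constructor
  · rintro ⟨u, hu⟩
    have hsol : ∀ n : ℕ, IsSolution F ((aclStep F.M)^[n] N) u := by
      intro n
      induction n with
      | zero => exact hu
      | succ n ih =>
        rw [Function.iterate_succ_apply']
        exact aux_sol_aclStep F _ u ih
    rintro ⟨x, y, hxy, i, hbot⟩
    have h1 : (u x, u y) ∈ F.I (acl F.M N x y) := hsol _ x y hxy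
    rw [aux_I_empty_of_bot F hbot] at h1
    exact h1
  · intro hnt
    set N' := acl F.M N with hN'
    have hfix : aclStep F.M N' = N' :=
      iterate_card_fixed (aclStep F.M) (aux_aclStep_le F.M) N
    have hx : ∀ x z : V, x ≠ z → N' x z = F.M.pcl (N' x z) ⊓ Finset.univ.inf
        (fun y => if x ≠ y ∧ y ≠ z then F.M.comp (N' x y) (N' y z) else ⊤) := by
      intro x z hxz
      conv_lhs => rw [← hfix]
      simp only [aclStep, if_neg hxz]
    have hclosed : AlgClosed F.M N' := by
      constructor
      · intro x y z hxy hyz hxz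
        have hle1 : N' x z ≤ Finset.univ.inf
            (fun w => if x ≠ w ∧ w ≠ z then F.M.comp (N' x w) (N' w z) else ⊤) := by
          conv_lhs => rw [hx x z hxz]
          exact inf_le_right
        have hle2 := hle1.trans (Finset.inf_le (Finset.mem_univ y))
        rwa [if_pos ⟨hxy, hyz⟩] at hle2
      · intro x z hxz
        have h1 : N' x z ≤ F.M.pcl (N' x z) := by
          conv_lhs => rw [hx x z hxz]
          exact inf_le_left
        have heq : F.M.pcl (N' x z) = N' x z :=
          le_antisymm (aux_pcl_le F.M _) h1
        have h2 := aux_pstep_pcl F.M (N' x z)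
        rw [heq] at h2
        exact aux_relClosedProj_of_fixed F.M h2
    obtain ⟨u, hu⟩ := part1 V N' (hover_acl _) ⟨hclosed, hnt⟩
    exact ⟨u, fun x y hxy => aux_I_mono F (hacl_le x y) (hu x y hxy)⟩
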